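/- In the exponential-activation setup, for any ε > 0 and δ ∈ (0, 1/4), suppose D ≥ 2048·ln(6m/ε), D ≥ 2048·ln(6m/δ), D ≥ 6·ln(2m), and m > 8·ln(6/δ). Then for every γ ∈ [0,1], the generalization error of the algorithm with respect to the ramp loss L^(γ) satisfies ε_gen(m,δ) ≤ ε. -/

import Mathlib

open MeasureTheory ProbabilityTheory
open scoped ENNReal NNReal

noncomputable section

namespace ExpExample

/-- Squared Euclidean norm on `Fin n → ℝ`. -/
def sqnorm {n : ℕ} (v : Fin n → ℝ) : ℝ := ∑ i, v i ^ 2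

/-- An example: an input `(x₁, x₂) ∈ ℝ^D × ℝ^D` together with a real label. -/
abbrev Ex (D : ℕ) := ((Fin D → ℝ) × (Fin D → ℝ)) × ℝ

/-- The noise distribution: `D` i.i.d. standard Gaussian `N(0,1)` coordinates. -/
def noise (D : ℕ) : Measure (Fin D → ℝ) :=
  Measure.pi fun _ => gaussianReal 0 1

/-- The data distribution `𝒟`: label `y` uniform on `{-1,1}`; given `y`,
`x₁ = y·u` and `x₂ ~ N(0, I)`. -/
def μD (D : ℕ) (u : Fin D → ℝ) : Measure (Ex D) :=
  (1/2 : ℝ≥0∞) • (noise D).map (fun x₂ => ((u, x₂), (1 : ℝ))) +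
  (1/2 : ℝ≥0∞) • (noise D).map (fun x₂ => ((-u, x₂), (-1 : ℝ)))

/-- Distribution of an i.i.d. `m`-sample from `𝒟`. -/
def μS (D m : ℕ) (u : Fin D → ℝ) : Measure (Fin m → Ex D) :=
  Measure.pi fun _ => μD D u

/-- The hypothesis learned on `S`:
`h_S(z) = Σᵢ y⁽ⁱ⁾·exp(‖(z + x⁽ⁱ⁾)/2‖₂²)`, where the squared norm on
`ℝ^{2D} = ℝ^D × ℝ^D` is the sum of the squared norms of the two components. -/
def alg (D m : ℕ) (S : Fin m → Ex D) : (Fin D → ℝ) × (Fin D → ℝ) → ℝ :=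
  fun z => ∑ i, (S i).2 *
    Real.exp (sqnorm ((1/2 : ℝ) • (z.1 + (S i).1.1)) +
              sqnorm ((1/2 : ℝ) • (z.2 + (S i).1.2)))

/-- The ramp loss `L^{(γ)}`. -/
def ramp (γ y' y : ℝ) : ℝ :=
  if y * y' ≤ 0 then 1 else if γ ≤ y * y' then 0 else 1 - y * y' / γ

/-- Expected (test) loss of a hypothesis. -/
def testLoss (D : ℕ) (u : Fin D → ℝ) (γ : ℝ)
    (h : (Fin D → ℝ) × (Fin D → ℝ) → ℝ) : ℝ :=
  ∫ z, ramp γ (h z.1) z.2 ∂(μD D u)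

/-- Empirical loss of a hypothesis on a sample `S`. -/
def empLoss (D m : ℕ) (γ : ℝ) (h : (Fin D → ℝ) × (Fin D → ℝ) → ℝ)
    (S : Fin m → Ex D) : ℝ :=
  (1 / (m : ℝ)) * ∑ i, ramp γ (h (S i).1) (S i).2

/-- The generalization error `ε_gen(m,δ)` of the algorithm w.r.t. `L^{(γ)}`. -/
def genErr (D m : ℕ) (u : Fin D → ℝ) (γ δ : ℝ) : ℝ :=
  sInf {ε : ℝ | 0 ≤ ε ∧
    ENNReal.ofReal (1 - δ) ≤
      μS D m u {S | testLoss D u γ (alg D m S)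
        - empLoss D m γ (alg D m S) S ≤ ε}}

/-- The tightest algorithm-dependent uniform convergence bound `ε_unif-alg(m,δ)`
w.r.t. `L^{(γ)}`. -/
def unifAlg (D m : ℕ) (u : Fin D → ℝ) (γ δ : ℝ) : ℝ :=
  sInf {ε : ℝ | 0 ≤ ε ∧
    ∃ 𝒮 : Set (Fin m → Ex D), MeasurableSet 𝒮 ∧
      ENNReal.ofReal (1 - δ) ≤ μS D m u 𝒮 ∧
      ∀ S ∈ 𝒮, ∀ S' ∈ 𝒮,
        |testLoss D u γ (alg D m S') - empLoss D m γ (alg D m S') S| ≤ ε}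

open Real

def γ1 : Measure ℝ := gaussianReal 0 1

lemma γ1_eq : γ1 = volume.withDensity (fun x => ((gaussianPDFReal 0 1 x).toNNReal : ℝ≥0∞)) := by
  rw [γ1, gaussianReal_of_var_ne_zero _ one_ne_zero]
  rfl

lemma meas_pdf : Measurable (fun x => (gaussianPDFReal 0 1 x).toNNReal) :=
  (measurable_gaussianPDFReal 0 1).real_toNNReal

lemma integral_γ1 (g : ℝ → ℝ) :
    ∫ x, g x ∂γ1 = ∫ x, gaussianPDFReal 0 1 x * g x := by
  rw [γ1_eq, integral_withDensity_eq_integral_smul meas_pdf]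
  congr 1; ext x
  simp [NNReal.smul_def, Real.coe_toNNReal _ (gaussianPDFReal_nonneg 0 1 x)]

lemma integrable_γ1_iff (g : ℝ → ℝ) :
    Integrable g γ1 ↔ Integrable (fun x => gaussianPDFReal 0 1 x * g x) volume := by
  rw [γ1_eq, integrable_withDensity_iff_integrable_smul meas_pdf]
  constructor <;> intro h <;> [skip; skip] <;>
  · refine h.congr (Filter.Eventually.of_forall fun x => ?_)
    simp [NNReal.smul_def, Real.coe_toNNReal _ (gaussianPDFReal_nonneg 0 1 x)]

lemma pdf_eq (x : ℝ) : gaussianPDFReal 0 1 x = (Real.sqrt (2 * π))⁻¹ * Real.exp (-(x^2)/2) := by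
  simp [gaussianPDFReal]

lemma integrable_exp_sq_γ1 {t : ℝ} (ht : t < 1/2) :
    Integrable (fun x => Real.exp (t * x^2)) γ1 := by
  rw [integrable_γ1_iff]
  have h12 : (0:ℝ) < 1/2 - t := by linarith
  have : (fun x => gaussianPDFReal 0 1 x * Real.exp (t * x^2))
      = fun x => (Real.sqrt (2 * π))⁻¹ * Real.exp (-(1/2 - t) * x^2) := by
    ext x; rw [pdf_eq, mul_assoc, ← Real.exp_add]; congr 1; ring
  rw [this]
  exact (integrable_exp_neg_mul_sq h12).const_mul _

lemma int_exp_sq {t : ℝ} (ht : t < 1/2) :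
    ∫ x, Real.exp (t * x^2) ∂γ1 = (Real.sqrt (1 - 2*t))⁻¹ := by
  have h12 : (0:ℝ) < 1/2 - t := by linarith
  rw [integral_γ1]
  have : (fun x => gaussianPDFReal 0 1 x * Real.exp (t * x^2))
      = fun x => (Real.sqrt (2 * π))⁻¹ * Real.exp (-(1/2 - t) * x^2) := by
    ext x; rw [pdf_eq, mul_assoc, ← Real.exp_add]; congr 1; ring
  rw [this, integral_const_mul, integral_gaussian]
  rw [← Real.sqrt_inv (2*π), ← Real.sqrt_mul (by positivity) (π / (1/2 - t)),
      ← Real.sqrt_inv (1 - 2*t)]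
  congr 1
  have hπ := Real.pi_ne_zero
  have h1 : (1:ℝ) - 2*t ≠ 0 := by intro h; linarith
  have h2 : (1:ℝ)/2 - t ≠ 0 := by intro h; linarith
  field_simp

lemma integrable_exp_lin_γ1 (s : ℝ) :
    Integrable (fun x => Real.exp (s * x)) γ1 := by
  rw [integrable_γ1_iff]
  have : (fun x => gaussianPDFReal 0 1 x * Real.exp (s * x))
      = fun x => ((Real.sqrt (2 * π))⁻¹ * Real.exp (s^2/2)) * Real.exp (-(1/2) * (x - s)^2) := by
    ext x; rw [pdf_eq]; rw [mul_assoc, ← Real.exp_add, mul_assoc, ← Real.exp_add]; congr 1; ring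
  rw [this]
  exact ((integrable_exp_neg_mul_sq (by norm_num : (0:ℝ) < 1/2)).comp_sub_right s).const_mul _

lemma int_exp_lin (s : ℝ) :
    ∫ x, Real.exp (s * x) ∂γ1 = Real.exp (s^2/2) := by
  rw [integral_γ1]
  have : (fun x => gaussianPDFReal 0 1 x * Real.exp (s * x))
      = fun x => ((Real.sqrt (2 * π))⁻¹ * Real.exp (s^2/2)) * Real.exp (-(1/2) * (x - s)^2) := by
    ext x; rw [pdf_eq]; rw [mul_assoc, ← Real.exp_add, mul_assoc, ← Real.exp_add]; congr 1; ring
  rw [this, integral_const_mul]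
  rw [integral_sub_right_eq_self (fun x => Real.exp (-(1/2) * x^2)) s]
  rw [integral_gaussian]
  have h : (√(2*π))⁻¹ * √(π / (1/2)) = 1 := by
    rw [← Real.sqrt_inv (2*π), ← Real.sqrt_mul (by positivity) (π / (1/2))]
    rw [show (2*π)⁻¹ * (π / (1/2)) = 1 by have hπ := Real.pi_ne_zero; field_simp]
    exact Real.sqrt_one
  rw [mul_comm ((√(2*π))⁻¹) (Real.exp (s^2/2)), mul_assoc, h, mul_one]

lemma I1 : ∫ x, Real.exp ((1/64) * x^2) ∂γ1 ≤ Real.exp (33/2048) := by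
  rw [int_exp_sq (by norm_num)]
  have ha : (1:ℝ) - 2*(1/64) = 31/32 := by norm_num
  rw [ha]
  have ha0 : (0:ℝ) < Real.sqrt (31/32) := Real.sqrt_pos.mpr (by norm_num)
  have ha2 : (Real.sqrt (31/32))^2 = 31/32 := Real.sq_sqrt (by norm_num)
  have he : (1:ℝ) + 33/2048 ≤ Real.exp (33/2048) := by
    have := Real.add_one_le_exp (33/2048); linarith
  rw [inv_le_iff_one_le_mul₀ ha0]
  nlinarith [Real.exp_pos (33/2048), sq_nonneg (Real.sqrt (31/32) * Real.exp (33/2048) - 1)]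

lemma I2 : ∫ x, Real.exp (-(1/64) * x^2) ∂γ1 ≤ Real.exp (-(31/2048)) := by
  rw [int_exp_sq (by norm_num)]
  have ha : (1:ℝ) - 2*(-(1/64)) = 33/32 := by norm_num
  rw [ha, Real.exp_neg]
  have ha0 : (0:ℝ) < Real.sqrt (33/32) := Real.sqrt_pos.mpr (by norm_num)
  refine inv_anti₀ (Real.exp_pos _) ?_
  rw [show Real.exp (31/2048) ≤ Real.sqrt (33/32) ↔ Real.exp (31/2048)^2 ≤ 33/32 from Real.le_sqrt (Real.exp_pos _).le (by norm_num)]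
  have h1 : Real.exp (31/2048) ^ 2 = Real.exp (31/1024) := by
    rw [← Real.exp_nat_mul]; norm_num
  rw [h1]
  have hx : (31:ℝ)/1024 < 1 := by norm_num
  have h2 : (1 - 31/1024) * Real.exp (31/1024) ≤ 1 := by
    have := Real.add_one_le_exp (-(31/1024))
    have h3 : (1:ℝ) - 31/1024 ≤ Real.exp (-(31/1024)) := by linarith
    calc (1 - 31/1024) * Real.exp (31/1024)
        ≤ Real.exp (-(31/1024)) * Real.exp (31/1024) := by
          apply mul_le_mul_of_nonneg_right h3 (Real.exp_pos _).le
      _ = 1 := by rw [← Real.exp_add]; norm_num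
  nlinarith [Real.exp_pos (31/1024)]

def mynoise (D : ℕ) : Measure (Fin D → ℝ) := Measure.pi fun _ => γ1

lemma noise_integral_prod {D : ℕ} (f : Fin D → ℝ → ℝ) :
    ∫ x, ∏ i, f i (x i) ∂(mynoise D) = ∏ i, ∫ t, f i t ∂γ1 := by
  letI : MeasureSpace ℝ := ⟨γ1⟩
  haveI : SigmaFinite (volume : Measure ℝ) := by
    show SigmaFinite γ1
    rw [γ1]; infer_instance
  exact MeasureTheory.integral_fintype_prod_eq_prod f

lemma noise_integrable_prod {D : ℕ} (f : Fin D → ℝ → ℝ) (hf : ∀ i, Integrable (f i) γ1) :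
    Integrable (fun x => ∏ i, f i (x i)) (mynoise D) := by
  letI : MeasureSpace ℝ := ⟨γ1⟩
  haveI : SigmaFinite (volume : Measure ℝ) := by
    show SigmaFinite γ1
    rw [γ1]; infer_instance
  exact MeasureTheory.Integrable.fintype_prod hf

lemma meas_le_integral {α : Type*} [MeasurableSpace α] (μ : Measure α) [IsProbabilityMeasure μ]
    {A : Set α} (hA : MeasurableSet A) {f : α → ℝ} (hf : Integrable f μ)
    (hle : ∀ x, A.indicator (fun _ => (1:ℝ)) x ≤ f x) :
    μ A ≤ ENNReal.ofReal (∫ x, f x ∂μ) := by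
  have h1 : ∫ x, A.indicator (fun _ => (1:ℝ)) x ∂μ = (μ A).toReal := by
    rw [integral_indicator hA, setIntegral_const, smul_eq_mul, mul_one]; rfl
  have h2 : (μ A).toReal ≤ ∫ x, f x ∂μ := by
    rw [← h1]
    exact integral_mono ((integrable_const (1:ℝ)).indicator hA) hf hle
  calc μ A = ENNReal.ofReal (μ A).toReal := (ENNReal.ofReal_toReal (measure_ne_top μ A)).symm
    _ ≤ _ := ENNReal.ofReal_le_ofReal h2

instance : IsProbabilityMeasure γ1 := by rw [γ1]; infer_instance
instance (D : ℕ) : IsProbabilityMeasure (mynoise D) := by rw [mynoise]; infer_instance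

lemma chernoff {D : ℕ} (φ : Fin D → ℝ → ℝ) (hmeas : ∀ i, Measurable (φ i))
    (hint : ∀ i, Integrable (fun x => Real.exp (φ i x)) γ1) (a B : ℝ)
    (hB : ∏ i, ∫ x, Real.exp (φ i x) ∂γ1 ≤ Real.exp B) :
    mynoise D {g | a ≤ ∑ i, φ i (g i)} ≤ ENNReal.ofReal (Real.exp (B - a)) := by
  have hA : MeasurableSet {g : Fin D → ℝ | a ≤ ∑ i, φ i (g i)} :=
    measurableSet_le measurable_const
      (Finset.measurable_sum _ fun i _ => (hmeas i).comp (measurable_pi_apply i))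
  have hintf : Integrable (fun g : Fin D → ℝ => Real.exp (-a) * ∏ i, Real.exp (φ i (g i)))
      (mynoise D) := (noise_integrable_prod _ hint).const_mul _
  have key := meas_le_integral (mynoise D) hA hintf ?_
  · refine key.trans (ENNReal.ofReal_le_ofReal ?_)
    rw [integral_const_mul, noise_integral_prod (fun i t => Real.exp (φ i t))]
    calc Real.exp (-a) * ∏ i, ∫ x, Real.exp (φ i x) ∂γ1
        ≤ Real.exp (-a) * Real.exp B := mul_le_mul_of_nonneg_left hB (Real.exp_pos _).le
      _ = Real.exp (B - a) := by rw [← Real.exp_add]; ring_nf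
  · intro g
    rw [Set.indicator_apply]
    split_ifs with hg
    · have : Real.exp a ≤ ∏ i, Real.exp (φ i (g i)) := by
        rw [← Real.exp_sum]
        exact Real.exp_le_exp.mpr hg
      calc (1:ℝ) = Real.exp (-a) * Real.exp a := by rw [← Real.exp_add]; simp
        _ ≤ _ := by
          apply mul_le_mul_of_nonneg_left this (Real.exp_pos _).le
    · positivity

def ip {n : ℕ} (v w : Fin n → ℝ) : ℝ := ∑ i, v i * w i

lemma sqnorm_nonneg {n : ℕ} (v : Fin n → ℝ) : 0 ≤ sqnorm v :=
  Finset.sum_nonneg fun i _ => sq_nonneg _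

lemma C1 (D : ℕ) : mynoise D {g | (D:ℝ) + D/16 ≤ sqnorm g}
    ≤ ENNReal.ofReal (Real.exp (-(D:ℝ)/2048)) := by
  have h := chernoff (D := D) (fun _ x => (1/64) * x^2) (fun i => by fun_prop)
    (fun i => integrable_exp_sq_γ1 (by norm_num)) (((D:ℝ) + D/16)/64) ((D:ℝ)*(33/2048)) ?_
  · have hset : {g : Fin D → ℝ | ((D:ℝ) + D/16)/64 ≤ ∑ i, (1/64) * (g i)^2}
        = {g | (D:ℝ) + D/16 ≤ sqnorm g} := by
      ext g
      have : ∑ i, (1/64 : ℝ) * (g i)^2 = (1/64) * sqnorm g := by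
        rw [sqnorm, Finset.mul_sum]
      simp only [Set.mem_setOf_eq, this]
      constructor <;> intro <;> linarith
    rw [hset] at h
    refine h.trans (ENNReal.ofReal_le_ofReal (Real.exp_le_exp.mpr (le_of_eq ?_)))
    ring
  · rw [Finset.prod_const]
    calc (∫ x, Real.exp ((1/64) * x^2) ∂γ1) ^ (Finset.univ : Finset (Fin D)).card
        ≤ Real.exp (33/2048) ^ (Finset.univ : Finset (Fin D)).card := by
          apply pow_le_pow_left₀ (integral_nonneg fun x => (Real.exp_pos _).le) I1
      _ = Real.exp ((D:ℝ)*(33/2048)) := by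
          rw [← Real.exp_nat_mul]; simp [Finset.card_univ]

lemma C2 (D : ℕ) : mynoise D {g | sqnorm g ≤ (D:ℝ) - D/16}
    ≤ ENNReal.ofReal (Real.exp (-(D:ℝ)/2048)) := by
  have h := chernoff (D := D) (fun _ x => -(1/64) * x^2) (fun i => by fun_prop)
    (fun i => integrable_exp_sq_γ1 (by norm_num)) (-(((D:ℝ) - D/16)/64)) ((D:ℝ)*(-(31/2048))) ?_
  · have hset : {g : Fin D → ℝ | -(((D:ℝ) - D/16)/64) ≤ ∑ i, -(1/64) * (g i)^2}
        = {g | sqnorm g ≤ (D:ℝ) - D/16} := by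
      ext g
      have : ∑ i, (-(1/64) : ℝ) * (g i)^2 = -(1/64) * sqnorm g := by
        rw [sqnorm, Finset.mul_sum]
      simp only [Set.mem_setOf_eq, this]
      constructor <;> intro <;> linarith
    rw [hset] at h
    refine h.trans (ENNReal.ofReal_le_ofReal (Real.exp_le_exp.mpr (le_of_eq ?_)))
    ring
  · rw [Finset.prod_const]
    calc (∫ x, Real.exp (-(1/64) * x^2) ∂γ1) ^ (Finset.univ : Finset (Fin D)).card
        ≤ Real.exp (-(31/2048)) ^ (Finset.univ : Finset (Fin D)).card := by
          apply pow_le_pow_left₀ (integral_nonneg fun x => (Real.exp_pos _).le) I2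
      _ = Real.exp ((D:ℝ)*(-(31/2048))) := by
          rw [← Real.exp_nat_mul]; simp [Finset.card_univ]

lemma C3 (D : ℕ) (hD : 0 < (D:ℝ)) (c : Fin D → ℝ) (hc0 : 0 < sqnorm c)
    (hc : sqnorm c ≤ 17*(D:ℝ)/16) :
    mynoise D {g | (D:ℝ)/16 ≤ ip g c} ≤ ENNReal.ofReal (Real.exp (-(D:ℝ)/2048)) := by
  set s := sqnorm c with hs
  set lam := ((D:ℝ)/16)/s with hlam
  have hlampos : 0 < lam := div_pos (by linarith) hc0
  have h := chernoff (fun i x => (lam * c i) * x) (fun i => by fun_prop)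
    (fun i => integrable_exp_lin_γ1 _) (lam * ((D:ℝ)/16)) (lam^2 * s / 2) ?_
  · have hset : {g : Fin D → ℝ | lam * ((D:ℝ)/16) ≤ ∑ i, (lam * c i) * (g i)}
        = {g | (D:ℝ)/16 ≤ ip g c} := by
      ext g
      have e1 : ∑ i, (lam * c i) * (g i) = lam * ip g c := by
        rw [ip, Finset.mul_sum]; congr 1; ext i; ring
      simp only [Set.mem_setOf_eq, e1]
      exact mul_le_mul_iff_right₀ hlampos
    rw [hset] at h
    refine h.trans (ENNReal.ofReal_le_ofReal (Real.exp_le_exp.mpr ?_))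
    have : lam^2 * s / 2 - lam * ((D:ℝ)/16) = -(((D:ℝ)/16)^2/(2*s)) := by
      rw [hlam]; field_simp; ring
    rw [this, show -(D:ℝ)/2048 = -((D:ℝ)/2048) by ring, neg_le_neg_iff,
      div_le_div_iff₀ (by norm_num) (by linarith)]
    nlinarith
  · have e2 : ∀ i : Fin D, ∫ x, Real.exp ((lam * c i) * x) ∂γ1 = Real.exp ((lam * c i)^2/2) :=
      fun i => int_exp_lin _
    rw [Finset.prod_congr rfl (fun i _ => e2 i), ← Real.exp_sum]
    apply Real.exp_le_exp.mpr (le_of_eq ?_)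
    have : ∑ i, (lam * c i)^2/2 = lam^2 * (∑ i, (c i)^2) / 2 := by
      simp only [mul_pow]
      rw [← Finset.sum_div, ← Finset.mul_sum]
    rw [this]
    rfl

-- additional algebra lemmas
lemma sqnorm_neg {n : ℕ} (v : Fin n → ℝ) : sqnorm (-v) = sqnorm v := by
  unfold sqnorm; congr 1; ext i; simp

lemma ip_neg {n : ℕ} (g c : Fin n → ℝ) : ip g (-c) = -(ip g c) := by
  unfold ip; rw [← Finset.sum_neg_distrib]; congr 1; ext i; simp

lemma sqnorm_half_add {n : ℕ} (g c : Fin n → ℝ) :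
    sqnorm ((1/2 : ℝ) • (g + c)) = (sqnorm g + 2 * ip g c + sqnorm c)/4 := by
  unfold sqnorm ip
  have : ∀ i, ((1/2 : ℝ) • (g + c)) i ^ 2 = (g i ^ 2 + 2 * (g i * c i) + c i ^ 2)/4 := by
    intro i; simp only [Pi.smul_apply, Pi.add_apply, smul_eq_mul]; ring
  rw [Finset.sum_congr rfl fun i _ => this i, ← Finset.sum_div]
  congr 1
  rw [Finset.sum_add_distrib, Finset.sum_add_distrib, Finset.mul_sum]

lemma measurable_sqnorm {n : ℕ} : Measurable (sqnorm (n := n)) :=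
  Finset.measurable_sum _ fun i _ => (measurable_pi_apply i).pow_const 2

lemma measurable_half_add {n : ℕ} (c : Fin n → ℝ) :
    Measurable (fun w : Fin n → ℝ => (1/2 : ℝ) • (w + c)) :=
  measurable_pi_lambda _ fun j => by
    have : Measurable fun w : Fin n → ℝ => (1/2 : ℝ) * (w j + c j) :=
      by fun_prop
    simpa [Pi.smul_apply] using this

lemma measurable_alg (D m : ℕ) (S : Fin m → Ex D) : Measurable (alg D m S) := by
  unfold alg
  apply Finset.measurable_sum
  intro i _
  apply Measurable.const_mul
  apply Real.measurable_exp.comp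
  apply Measurable.add
  · exact (measurable_sqnorm.comp ((measurable_half_add _).comp measurable_fst))
  · exact (measurable_sqnorm.comp ((measurable_half_add _).comp measurable_snd))

lemma ramp_nonneg (γ y' y : ℝ) : 0 ≤ ramp γ y' y := by
  unfold ramp
  split_ifs with h1 h2
  · norm_num
  · norm_num
  · push_neg at h1 h2
    have hγ : 0 < γ := lt_trans h1 h2
    have : y * y' / γ < 1 := (div_lt_one hγ).mpr h2
    linarith

lemma ramp_le_one (γ y' y : ℝ) : ramp γ y' y ≤ 1 := by
  unfold ramp
  split_ifs with h1 h2
  · norm_num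
  · norm_num
  · push_neg at h1 h2
    have hγ : 0 < γ := lt_trans h1 h2
    have : 0 < y * y' / γ := div_pos h1 hγ
    linarith

lemma sqnorm_nonneg' {n : ℕ} (v : Fin n → ℝ) : 0 ≤ sqnorm v :=
  Finset.sum_nonneg fun i _ => sq_nonneg _

lemma margin (D m : ℕ) (hm : 1 ≤ m) (u : Fin D → ℝ) (hu4 : sqnorm u = (D:ℝ)/4)
    (S : Fin m → Ex D)
    (hT : ∀ i, S i = (((u : Fin D → ℝ), (S i).1.2), (1:ℝ)) ∨
               S i = ((-u, (S i).1.2), (-1:ℝ)))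
    (hnorm : ∀ i, |sqnorm (S i).1.2 - (D:ℝ)| ≤ (D:ℝ)/16)
    (y : ℝ) (v : Fin D → ℝ)
    (hyv : (y = 1 ∧ v = u) ∨ (y = -1 ∧ v = -u))
    (i₀ : Fin m) (hi₀ : (S i₀).2 = y)
    (g : Fin D → ℝ) (hg : |sqnorm g - (D:ℝ)| ≤ (D:ℝ)/16)
    (hip : ∀ i, |ip g ((S i).1.2)| ≤ (D:ℝ)/16)
    (hDm : (m:ℝ) + 1 ≤ Real.exp ((D:ℝ)/8)) (hD0 : (0:ℝ) ≤ D) :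
    1 ≤ y * alg D m S (v, g) := by
  classical
  set b : Fin m → ℝ := fun i => sqnorm ((1/2 : ℝ) • (g + (S i).1.2)) with hb
  have hbbound : ∀ i, (D:ℝ)/2 - D/16 ≤ b i ∧ b i ≤ (D:ℝ)/2 + D/16 := by
    intro i
    have h1 := abs_le.mp (hnorm i)
    have h2 := abs_le.mp hg
    have h3 := abs_le.mp (hip i)
    rw [hb]
    simp only
    rw [sqnorm_half_add]
    constructor <;> nlinarith [h1.1, h1.2, h2.1, h2.2, h3.1, h3.2]
  set M : ℝ := Real.exp ((D:ℝ)/2 + D/16) with hM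
  set term : Fin m → ℝ := fun i => y * ((S i).2 *
      Real.exp (sqnorm ((1/2 : ℝ) • (v + (S i).1.1)) + b i)) with hterm
  have key1 : ∀ i, (S i).2 = y → term i = Real.exp ((D:ℝ)/4 + b i) := by
    intro i hiy
    rcases hyv with ⟨hy, hv⟩ | ⟨hy, hv⟩ <;> rcases hT i with hSi | hSi
    · have h11 : (S i).1.1 = u := by rw [hSi]
      have hhalf : (1/2 : ℝ) • (v + (S i).1.1) = u := by
        rw [hv, h11]; ext j; simp [Pi.smul_apply]; ring
      rw [hterm]; simp only [hhalf, hu4, hiy, hy]; ring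
    · exfalso
      have : (S i).2 = -1 := by rw [hSi]
      rw [hiy, hy] at this; norm_num at this
    · exfalso
      have : (S i).2 = 1 := by rw [hSi]
      rw [hiy, hy] at this; norm_num at this
    · have h11 : (S i).1.1 = -u := by rw [hSi]
      have hhalf : (1/2 : ℝ) • (v + (S i).1.1) = -u := by
        rw [hv, h11]; ext j; simp [Pi.smul_apply]; ring
      rw [hterm]; simp only [hhalf, sqnorm_neg, hu4, hiy, hy]; ring
  have key2 : ∀ i, (S i).2 ≠ y → term i = -Real.exp (b i) := by
    intro i hiy
    rcases hyv with ⟨hy, hv⟩ | ⟨hy, hv⟩ <;> rcases hT i with hSi | hSi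
    · exfalso
      have : (S i).2 = 1 := by rw [hSi]
      rw [hy] at hiy; exact hiy this
    · have h11 : (S i).1.1 = -u := by rw [hSi]
      have h2 : (S i).2 = -1 := by rw [hSi]
      have hhalf : (1/2 : ℝ) • (v + (S i).1.1) = 0 := by
        rw [hv, h11]; ext j; simp [Pi.smul_apply]
      rw [hterm]; simp only [hhalf, h2, hy]
      have h0 : sqnorm (0 : Fin D → ℝ) = 0 := by simp [sqnorm]
      rw [h0, zero_add]; ring
    · have h11 : (S i).1.1 = u := by rw [hSi]
      have h2 : (S i).2 = 1 := by rw [hSi]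
      have hhalf : (1/2 : ℝ) • (v + (S i).1.1) = 0 := by
        rw [hv, h11]; ext j; simp [Pi.smul_apply]
      rw [hterm]; simp only [hhalf, h2, hy]
      have h0 : sqnorm (0 : Fin D → ℝ) = 0 := by simp [sqnorm]
      rw [h0, zero_add]; ring
    · exfalso
      have : (S i).2 = -1 := by rw [hSi]
      rw [hy] at hiy; exact hiy this
  have hlow : ∀ i, -M ≤ term i := by
    intro i
    by_cases hiy : (S i).2 = y
    · rw [key1 i hiy]
      have : (0:ℝ) < Real.exp ((D:ℝ)/4 + b i) := Real.exp_pos _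
      have hM0 : (0:ℝ) < M := Real.exp_pos _
      linarith
    · rw [key2 i hiy, neg_le_neg_iff, hM]
      exact Real.exp_le_exp.mpr (by linarith [(hbbound i).2])
  have hkey : Real.exp ((D:ℝ)/4 + ((D:ℝ)/2 - D/16)) ≤ term i₀ := by
    rw [key1 i₀ hi₀]
    exact Real.exp_le_exp.mpr (by linarith [(hbbound i₀).1])
  have halg : y * alg D m S (v, g) = ∑ i, term i := by
    unfold alg
    rw [Finset.mul_sum]
  rw [halg]
  have hsum : ∑ i, term i = term i₀ + ∑ i ∈ Finset.univ.erase i₀, term i :=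
    (Finset.add_sum_erase _ _ (Finset.mem_univ i₀)).symm
  have htail : -(((m:ℝ) - 1) * M) ≤ ∑ i ∈ Finset.univ.erase i₀, term i := by
    have := Finset.sum_le_sum (f := fun _ => -M) (g := term)
      (fun i (_ : i ∈ Finset.univ.erase i₀) => hlow i)
    rw [Finset.sum_const, Finset.card_erase_of_mem (Finset.mem_univ i₀),
      Finset.card_univ, Fintype.card_fin] at this
    have hc : ((m - 1 : ℕ) : ℝ) = (m:ℝ) - 1 := by
      rw [Nat.cast_sub hm, Nat.cast_one]
    calc -(((m:ℝ) - 1) * M) = (m - 1 : ℕ) • (-M) := by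
          rw [nsmul_eq_mul, hc]; ring
      _ ≤ _ := this
  have hM0 : (0:ℝ) < M := Real.exp_pos _
  have hM1 : (1:ℝ) ≤ M := by
    rw [hM, ← Real.exp_zero]
    exact Real.exp_le_exp.mpr (by linarith)
  have hsplit : Real.exp ((D:ℝ)/4 + ((D:ℝ)/2 - D/16)) = M * Real.exp ((D:ℝ)/8) := by
    rw [hM, ← Real.exp_add]
    congr 1; ring
  rw [hsum]
  have : M * Real.exp ((D:ℝ)/8) ≥ M * ((m:ℝ) + 1) :=
    mul_le_mul_of_nonneg_left hDm hM0.le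
  nlinarith

-- ==================== measure layer ====================

lemma noise_eq (D : ℕ) : noise D = mynoise D := rfl

lemma μS_eq (D m : ℕ) (u : Fin D → ℝ) :
    μS D m u = Measure.pi fun _ : Fin m => μD D u := rfl

lemma meas_f1 (D : ℕ) (u : Fin D → ℝ) :
    Measurable (fun x₂ : Fin D → ℝ => ((u, x₂), (1:ℝ))) :=
  (measurable_const.prodMk measurable_id).prodMk measurable_const

lemma meas_f2 (D : ℕ) (u : Fin D → ℝ) :
    Measurable (fun x₂ : Fin D → ℝ => ((-u, x₂), (-1:ℝ))) :=
  (measurable_const.prodMk measurable_id).prodMk measurable_const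

lemma μD_apply (D : ℕ) (u : Fin D → ℝ) {A : Set (Ex D)} (hA : MeasurableSet A) :
    μD D u A = 1/2 * mynoise D ((fun g => ((u, g), (1:ℝ))) ⁻¹' A)
      + 1/2 * mynoise D ((fun g => ((-u, g), (-1:ℝ))) ⁻¹' A) := by
  rw [μD, Measure.add_apply, Measure.smul_apply, Measure.smul_apply,
    Measure.map_apply (meas_f1 D u) hA, Measure.map_apply (meas_f2 D u) hA,
    smul_eq_mul, smul_eq_mul, noise_eq]

instance (D : ℕ) (u : Fin D → ℝ) : IsProbabilityMeasure (μD D u) := by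
  constructor
  rw [μD_apply D u MeasurableSet.univ]
  simp only [Set.preimage_univ, measure_univ, mul_one, one_div]
  exact ENNReal.inv_two_add_inv_two

instance (D m : ℕ) (u : Fin D → ℝ) : IsProbabilityMeasure (μS D m u) := by
  rw [μS_eq]; infer_instance

lemma pi_eval_apply {α : Type*} [MeasurableSpace α] (μ : Measure α) [IsProbabilityMeasure μ]
    {m : ℕ} (i : Fin m) {B : Set α} (hB : MeasurableSet B) :
    (Measure.pi fun _ : Fin m => μ) (Function.eval i ⁻¹' B) = μ B := by
  have hset : Function.eval i ⁻¹' B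
      = Set.pi Set.univ (Function.update (fun _ : Fin m => (Set.univ : Set α)) i B) := by
    ext x
    simp only [Set.mem_preimage, Function.eval, Set.mem_pi, Set.mem_univ, forall_true_left,
      Function.update_apply]
    constructor
    · intro hx j
      split_ifs with hj
      · subst hj; exact hx
      · trivial
    · intro hx
      have := hx i
      simpa using this
  rw [hset, Measure.pi_pi]
  rw [Finset.prod_eq_single i (fun j _ hj => by rw [Function.update_of_ne hj]; exact measure_univ)
    (fun h => absurd (Finset.mem_univ i) h)]
  rw [Function.update_self]

lemma pi_all_apply {α : Type*} [MeasurableSpace α] (μ : Measure α) [IsProbabilityMeasure μ]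
    {m : ℕ} {B : Set α} (hB : MeasurableSet B) :
    (Measure.pi fun _ : Fin m => μ) {x | ∀ i, x i ∈ B} = μ B ^ m := by
  have hset : {x : Fin m → α | ∀ i, x i ∈ B} = Set.pi Set.univ (fun _ => B) := by
    ext x; simp [Set.mem_pi]
  rw [hset, Measure.pi_pi, Finset.prod_const, Finset.card_univ, Fintype.card_fin]

lemma measurable_ramp_comp (D m : ℕ) (γ : ℝ) (S : Fin m → Ex D) :
    Measurable fun z : Ex D => ramp γ (alg D m S z.1) z.2 := by
  have hq : Measurable fun z : Ex D => z.2 * alg D m S z.1 :=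
    measurable_snd.mul ((measurable_alg D m S).comp measurable_fst)
  have heq : (fun z : Ex D => ramp γ (alg D m S z.1) z.2)
      = fun z => if z.2 * alg D m S z.1 ≤ 0 then 1
          else if γ ≤ z.2 * alg D m S z.1 then 0 else 1 - z.2 * alg D m S z.1 / γ := rfl
  rw [heq]
  exact Measurable.ite (measurableSet_le hq measurable_const) measurable_const
    (Measurable.ite (measurableSet_le measurable_const hq) measurable_const
      ((hq.div_const γ).const_sub 1))

lemma testLoss_le (D m : ℕ) (u : Fin D → ℝ) (γ : ℝ) (hγ1 : γ ≤ 1) (S : Fin m → Ex D) :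
    testLoss D u γ (alg D m S)
      ≤ (μD D u {z : Ex D | z.2 * alg D m S z.1 < 1}).toReal := by
  have hq : Measurable fun z : Ex D => z.2 * alg D m S z.1 :=
    measurable_snd.mul ((measurable_alg D m S).comp measurable_fst)
  have hBad : MeasurableSet {z : Ex D | z.2 * alg D m S z.1 < 1} :=
    measurableSet_lt hq measurable_const
  have hint : Integrable (fun z => ramp γ (alg D m S z.1) z.2) (μD D u) := by
    apply Integrable.mono' (integrable_const (1:ℝ))
      (measurable_ramp_comp D m γ S).aestronglyMeasurable
    apply Filter.Eventually.of_forall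
    intro z
    rw [Real.norm_eq_abs, abs_of_nonneg (ramp_nonneg _ _ _)]
    exact ramp_le_one _ _ _
  have hmono : ∀ z, ramp γ (alg D m S z.1) z.2
      ≤ Set.indicator {z : Ex D | z.2 * alg D m S z.1 < 1} (fun _ => (1:ℝ)) z := by
    intro z
    rw [Set.indicator_apply]
    split_ifs with hz
    · exact ramp_le_one _ _ _
    · have hq1 : 1 ≤ z.2 * alg D m S z.1 := not_lt.mp hz
      have : ramp γ (alg D m S z.1) z.2 = 0 := by
        unfold ramp
        rw [if_neg (by linarith), if_pos (by linarith)]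
      rw [this]
  calc testLoss D u γ (alg D m S) = ∫ z, ramp γ (alg D m S z.1) z.2 ∂(μD D u) := rfl
    _ ≤ ∫ z, Set.indicator {z : Ex D | z.2 * alg D m S z.1 < 1} (fun _ => (1:ℝ)) z ∂(μD D u) :=
        integral_mono hint ((integrable_const 1).indicator hBad) hmono
    _ = _ := by rw [integral_indicator hBad, setIntegral_const, smul_eq_mul, mul_one]; rfl

lemma empLoss_nonneg (D m : ℕ) (γ : ℝ) (h : (Fin D → ℝ) × (Fin D → ℝ) → ℝ)
    (S : Fin m → Ex D) : 0 ≤ empLoss D m γ h S := by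
  unfold empLoss
  apply mul_nonneg (by positivity)
  exact Finset.sum_nonneg fun i _ => ramp_nonneg _ _ _

set_option maxHeartbeats 2000000 in
/-- in the exponential-activation setup, for suitable `D` and
`m`, for every `γ ∈ [0,1]` the generalization error w.r.t. `L^{(γ)}`
satisfies `ε_gen(m,δ) ≤ ε`. -/
theorem generalization_error_small
    (D m : ℕ) (hm : 1 ≤ m) (u : Fin D → ℝ)
    (hu : Real.sqrt (sqnorm u) = Real.sqrt D / 2)
    (ε δ : ℝ) (hε : 0 < ε) (hδ0 : 0 < δ) (hδ1 : δ < 1 / 4)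
    (hD1 : 2048 * Real.log (6 * m / ε) ≤ (D : ℝ))
    (hD2 : 2048 * Real.log (6 * m / δ) ≤ (D : ℝ))
    (hD3 : 6 * Real.log (2 * m) ≤ (D : ℝ))
    (hm' : 8 * Real.log (6 / δ) < (m : ℝ)) :
    ∀ γ ∈ Set.Icc (0 : ℝ) 1, genErr D m u γ δ ≤ ε := by
  classical
  intro γ hγ
  obtain ⟨hγ0, hγle1⟩ := hγ
  have hm1 : (1:ℝ) ≤ (m:ℝ) := by exact_mod_cast hm
  have hmpos : (0:ℝ) < m := by linarith
  have hmne : (m:ℝ) ≠ 0 := ne_of_gt hmpos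
  have hq1 : (1:ℝ) < 6 * m / δ := by
    rw [lt_div_iff₀ hδ0]; nlinarith
  have hlogpos : (0:ℝ) < Real.log (6 * m / δ) := Real.log_pos hq1
  have hD0 : (0:ℝ) < D := lt_of_lt_of_le (by positivity) hD2
  have hu4 : sqnorm u = (D:ℝ)/4 := by
    have h2 : sqnorm u = (Real.sqrt (sqnorm u))^2 := (Real.sq_sqrt (sqnorm_nonneg' u)).symm
    rw [h2, hu, div_pow, Real.sq_sqrt (le_of_lt hD0)]
    norm_num
  have hexpδ : Real.exp (-(D:ℝ)/2048) ≤ δ/(6*m) := by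
    have h1 : Real.log (6*m/δ) ≤ (D:ℝ)/2048 := by linarith
    have h2 : Real.exp (-(D:ℝ)/2048) ≤ Real.exp (-Real.log (6*m/δ)) :=
      Real.exp_le_exp.mpr (by linarith)
    rw [Real.exp_neg, Real.exp_log (by positivity)] at h2
    rwa [inv_div] at h2
  have hexpε : Real.exp (-(D:ℝ)/2048) ≤ ε/(6*m) := by
    have h1 : Real.log (6*m/ε) ≤ (D:ℝ)/2048 := by linarith
    have h2 : Real.exp (-(D:ℝ)/2048) ≤ Real.exp (-Real.log (6*m/ε)) :=
      Real.exp_le_exp.mpr (by linarith)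
    rw [Real.exp_neg, Real.exp_log (by positivity)] at h2
    rwa [inv_div] at h2
  have hDm : (m:ℝ) + 1 ≤ Real.exp ((D:ℝ)/8) := by
    have h24 : Real.log (24*m) ≤ Real.log (6*m/δ) := by
      apply Real.log_le_log (by positivity)
      rw [le_div_iff₀ hδ0]; nlinarith
    have h8 : Real.log (24*m) ≤ (D:ℝ)/8 := by linarith
    have h3 := Real.exp_le_exp.mpr h8
    rw [Real.exp_log (by positivity)] at h3
    linarith
  have hhalf : ((1:ℝ)/2)^m ≤ δ/6 := by
    have hl2 : (1:ℝ)/2 ≤ Real.log 2 := by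
      have := Real.log_two_gt_d9; linarith
    have h6pos : (0:ℝ) < 6/δ := by positivity
    have hlogq : Real.log (6/δ) < (m:ℝ)/8 := by linarith
    have h1 : Real.log (6/δ) ≤ (m:ℝ) * Real.log 2 := by nlinarith
    have h2 : (6:ℝ)/δ ≤ 2^m := by
      have h3 := Real.exp_le_exp.mpr h1
      rw [Real.exp_log h6pos, Real.exp_nat_mul, Real.exp_log two_pos] at h3
      exact h3
    calc ((1:ℝ)/2)^m = ((2:ℝ)^m)⁻¹ := by rw [one_div, inv_pow]
      _ ≤ ((6:ℝ)/δ)⁻¹ := inv_anti₀ h6pos h2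
      _ = δ/6 := by rw [inv_div]
  -- the sets
  set T : Set (Ex D) := {e | e = ((u, e.1.2), (1:ℝ)) ∨ e = ((-u, e.1.2), (-1:ℝ))} with hTdef
  have hTmeas : MeasurableSet T := by
    have hTeq : T = ((fun e : Ex D => e.1.1) ⁻¹' {u} ∩ (fun e : Ex D => e.2) ⁻¹' {1})
        ∪ ((fun e : Ex D => e.1.1) ⁻¹' {-u} ∩ (fun e : Ex D => e.2) ⁻¹' {-1}) := by
      ext ⟨⟨a,b⟩,c⟩
      simp only [hTdef, Set.mem_setOf_eq, Prod.mk.injEq, Set.mem_union, Set.mem_inter_iff,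
        Set.mem_preimage, Set.mem_singleton_iff]
      tauto
    rw [hTeq]
    have hff : Measurable fun e : Ex D => e.1.1 := measurable_fst.comp measurable_fst
    exact ((hff (measurableSet_singleton u)).inter
        (measurable_snd (measurableSet_singleton 1))).union
      ((hff (measurableSet_singleton (-u))).inter
        (measurable_snd (measurableSet_singleton (-1))))
  set N : Set (Ex D) := {e | |sqnorm e.1.2 - (D:ℝ)| ≤ (D:ℝ)/16} with hNdef
  have hNmeas : MeasurableSet N := by
    have hmeasf : Measurable fun e : Ex D => |sqnorm e.1.2 - (D:ℝ)| :=
      ((measurable_sqnorm.comp (measurable_snd.comp measurable_fst)).sub measurable_const).abs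
    exact measurableSet_le hmeasf measurable_const
  set Q1 : Set (Ex D) := {e | e.2 ≠ 1} with hQ1def
  have hQ1meas : MeasurableSet Q1 := (measurable_snd (measurableSet_singleton (1:ℝ))).compl
  set Q2 : Set (Ex D) := {e | e.2 ≠ -1} with hQ2def
  have hQ2meas : MeasurableSet Q2 := (measurable_snd (measurableSet_singleton (-1:ℝ))).compl
  set 𝒢 : Set (Fin m → Ex D) := {S | (∀ i, S i ∈ T) ∧ (∃ i, (S i).2 = 1) ∧
      (∃ i, (S i).2 = -1) ∧ (∀ i, S i ∈ N)} with hGdef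
  -- Step B : measure of the good set
  have hsubc : 𝒢ᶜ ⊆ (⋃ i, Function.eval i ⁻¹' Tᶜ) ∪ {S : Fin m → Ex D | ∀ i, S i ∈ Q1}
      ∪ {S : Fin m → Ex D | ∀ i, S i ∈ Q2} ∪ (⋃ i, Function.eval i ⁻¹' Nᶜ) := by
    intro S hS
    simp only [hGdef, Set.mem_compl_iff, Set.mem_setOf_eq, not_and_or] at hS
    rcases hS with h | h | h | h
    · left; left; left
      push_neg at h
      obtain ⟨i, hi⟩ := h
      exact Set.mem_iUnion.mpr ⟨i, hi⟩
    · left; left; right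
      push_neg at h
      exact fun i => h i
    · left; right
      push_neg at h
      exact fun i => h i
    · right
      push_neg at h
      obtain ⟨i, hi⟩ := h
      exact Set.mem_iUnion.mpr ⟨i, hi⟩
  have hA0 : μS D m u (⋃ i, Function.eval i ⁻¹' Tᶜ) = 0 := by
    apply le_antisymm _ zero_le
    refine le_trans (measure_iUnion_le _) ?_
    have hzero : ∀ i : Fin m, μS D m u (Function.eval i ⁻¹' Tᶜ) = 0 := by
      intro i
      rw [μS_eq, pi_eval_apply _ i hTmeas.compl, μD_apply D u hTmeas.compl]
      have e1 : (fun g : Fin D → ℝ => ((u, g), (1:ℝ))) ⁻¹' Tᶜ = ∅ := by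
        ext g; simp [hTdef]
      have e2 : (fun g : Fin D → ℝ => ((-u, g), (-1:ℝ))) ⁻¹' Tᶜ = ∅ := by
        ext g; simp [hTdef]
      rw [e1, e2]
      simp
    calc ∑' i : Fin m, μS D m u (Function.eval i ⁻¹' Tᶜ) = ∑' _i : Fin m, 0 :=
        tsum_congr hzero
      _ ≤ 0 := by simp
  have h12 : (1/2 : ℝ≥0∞) = ENNReal.ofReal (1/2) := by
    rw [ENNReal.ofReal_div_of_pos (by norm_num), ENNReal.ofReal_one, ENNReal.ofReal_ofNat]
  have hB1 : μS D m u {S : Fin m → Ex D | ∀ i, S i ∈ Q1} ≤ ENNReal.ofReal (δ/6) := by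
    rw [μS_eq, pi_all_apply _ hQ1meas]
    have hμQ1 : μD D u Q1 = 1/2 := by
      rw [μD_apply D u hQ1meas]
      have e1 : (fun g : Fin D → ℝ => ((u, g), (1:ℝ))) ⁻¹' Q1 = ∅ := by
        ext g; simp [hQ1def]
      have e2 : (fun g : Fin D → ℝ => ((-u, g), (-1:ℝ))) ⁻¹' Q1 = Set.univ := by
        ext g; simp [hQ1def]; norm_num
      rw [e1, e2]
      simp
    rw [hμQ1, h12, ← ENNReal.ofReal_pow (by norm_num)]
    exact ENNReal.ofReal_le_ofReal hhalf
  have hB2 : μS D m u {S : Fin m → Ex D | ∀ i, S i ∈ Q2} ≤ ENNReal.ofReal (δ/6) := by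
    rw [μS_eq, pi_all_apply _ hQ2meas]
    have hμQ2 : μD D u Q2 = 1/2 := by
      rw [μD_apply D u hQ2meas]
      have e1 : (fun g : Fin D → ℝ => ((u, g), (1:ℝ))) ⁻¹' Q2 = Set.univ := by
        ext g; simp [hQ2def]; norm_num
      have e2 : (fun g : Fin D → ℝ => ((-u, g), (-1:ℝ))) ⁻¹' Q2 = ∅ := by
        ext g; simp [hQ2def]
      rw [e1, e2]
      simp
    rw [hμQ2, h12, ← ENNReal.ofReal_pow (by norm_num)]
    exact ENNReal.ofReal_le_ofReal hhalf
  have hE : μS D m u (⋃ i, Function.eval i ⁻¹' Nᶜ) ≤ ENNReal.ofReal (δ/3) := by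
    refine le_trans (measure_iUnion_le _) ?_
    have hper : ∀ i : Fin m, μS D m u (Function.eval i ⁻¹' Nᶜ) ≤ ENNReal.ofReal (δ/(3*m)) := by
      intro i
      rw [μS_eq, pi_eval_apply _ i hNmeas.compl, μD_apply D u hNmeas.compl]
      have e1 : (fun g : Fin D → ℝ => ((u, g), (1:ℝ))) ⁻¹' Nᶜ
          = {g : Fin D → ℝ | ¬(|sqnorm g - (D:ℝ)| ≤ (D:ℝ)/16)} := by
        ext g; simp [hNdef]
      have e2 : (fun g : Fin D → ℝ => ((-u, g), (-1:ℝ))) ⁻¹' Nᶜ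
          = {g : Fin D → ℝ | ¬(|sqnorm g - (D:ℝ)| ≤ (D:ℝ)/16)} := by
        ext g; simp [hNdef]
      rw [e1, e2]
      have hsub2 : {g : Fin D → ℝ | ¬(|sqnorm g - (D:ℝ)| ≤ (D:ℝ)/16)}
          ⊆ {g | (D:ℝ) + (D:ℝ)/16 ≤ sqnorm g} ∪ {g | sqnorm g ≤ (D:ℝ) - (D:ℝ)/16} := by
        intro g hg
        rw [Set.mem_setOf_eq, not_le] at hg
        rcases lt_abs.mp hg with h | h
        · left; rw [Set.mem_setOf_eq]; linarith
        · right; rw [Set.mem_setOf_eq]; linarith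
      have hnn : mynoise D {g : Fin D → ℝ | ¬(|sqnorm g - (D:ℝ)| ≤ (D:ℝ)/16)}
          ≤ ENNReal.ofReal (δ/(3*m)) := by
        refine le_trans (measure_mono hsub2) (le_trans (measure_union_le _ _) ?_)
        have := add_le_add (le_trans (C1 D) (ENNReal.ofReal_le_ofReal hexpδ))
          (le_trans (C2 D) (ENNReal.ofReal_le_ofReal hexpδ))
        refine le_trans this ?_
        rw [← ENNReal.ofReal_add (by positivity) (by positivity)]
        apply ENNReal.ofReal_le_ofReal
        rw [← add_div]
        apply le_of_eq
        field_simp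
        ring
      calc 1/2 * mynoise D {g : Fin D → ℝ | ¬(|sqnorm g - (D:ℝ)| ≤ (D:ℝ)/16)}
            + 1/2 * mynoise D {g : Fin D → ℝ | ¬(|sqnorm g - (D:ℝ)| ≤ (D:ℝ)/16)}
          = mynoise D {g : Fin D → ℝ | ¬(|sqnorm g - (D:ℝ)| ≤ (D:ℝ)/16)} := by
            rw [one_div, ← add_mul, ENNReal.inv_two_add_inv_two, one_mul]
        _ ≤ ENNReal.ofReal (δ/(3*m)) := hnn
    calc ∑' i : Fin m, μS D m u (Function.eval i ⁻¹' Nᶜ)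
        ≤ ∑' _i : Fin m, ENNReal.ofReal (δ/(3*m)) := ENNReal.tsum_le_tsum hper
      _ = (m:ℝ≥0∞) * ENNReal.ofReal (δ/(3*m)) := by
          rw [tsum_fintype, Finset.sum_const, Finset.card_univ, Fintype.card_fin, nsmul_eq_mul]
      _ = ENNReal.ofReal ((m:ℝ) * (δ/(3*m))) := by
          rw [ENNReal.ofReal_mul (by positivity), ENNReal.ofReal_natCast]
      _ = ENNReal.ofReal (δ/3) := by
          congr 1
          field_simp
  have hbound : μS D m u 𝒢ᶜ ≤ ENNReal.ofReal δ := by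
    refine le_trans (measure_mono hsubc) ?_
    refine le_trans (measure_union_le _ _) ?_
    refine le_trans (add_le_add (measure_union_le _ _) le_rfl) ?_
    refine le_trans (add_le_add (add_le_add (measure_union_le _ _) le_rfl) le_rfl) ?_
    refine le_trans (add_le_add (add_le_add (add_le_add hA0.le hB1) hB2) hE) ?_
    rw [zero_add, ← ENNReal.ofReal_add (by positivity) (by positivity),
      ← ENNReal.ofReal_add (by positivity) (by positivity)]
    apply ENNReal.ofReal_le_ofReal
    linarith
  have hG : ENNReal.ofReal (1-δ) ≤ μS D m u 𝒢 := by
    have huniv : (1:ℝ≥0∞) ≤ μS D m u 𝒢 + μS D m u 𝒢ᶜ := by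
      have h1 : μS D m u Set.univ = 1 := measure_univ
      rw [← h1, ← Set.union_compl_self 𝒢]
      exact measure_union_le _ _
    have h2 : (1:ℝ≥0∞) ≤ μS D m u 𝒢 + ENNReal.ofReal δ :=
      le_trans huniv (add_le_add_right hbound _)
    have h3 : ENNReal.ofReal (1-δ) + ENNReal.ofReal δ ≤ μS D m u 𝒢 + ENNReal.ofReal δ := by
      rw [← ENNReal.ofReal_add (by linarith) hδ0.le,
        show (1:ℝ) - δ + δ = 1 by ring, ENNReal.ofReal_one]
      exact h2
    exact ENNReal.le_of_add_le_add_right ENNReal.ofReal_ne_top h3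
  -- Step A : on the good set, test loss is small
  have hsub : 𝒢 ⊆ {S : Fin m → Ex D |
      testLoss D u γ (alg D m S) - empLoss D m γ (alg D m S) S ≤ ε} := by
    intro S hS
    obtain ⟨hT', hEx1, hExm1, hN'⟩ := hS
    have hTmem : ∀ i, S i = ((u, (S i).1.2), (1:ℝ)) ∨ S i = ((-u, (S i).1.2), (-1:ℝ)) :=
      fun i => hT' i
    have hnorm' : ∀ i, |sqnorm (S i).1.2 - (D:ℝ)| ≤ (D:ℝ)/16 := fun i => hN' i
    set BadG : Set (Fin D → ℝ) := {g | (D:ℝ) + (D:ℝ)/16 ≤ sqnorm g}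
        ∪ {g | sqnorm g ≤ (D:ℝ) - (D:ℝ)/16}
        ∪ (⋃ i, {g | (D:ℝ)/16 ≤ ip g ((S i).1.2)})
        ∪ (⋃ i, {g | (D:ℝ)/16 ≤ ip g (-((S i).1.2))}) with hBadG
    have hsc : ∀ i : Fin m, 0 < sqnorm ((S i).1.2) ∧ sqnorm ((S i).1.2) ≤ 17*(D:ℝ)/16 := by
      intro i
      have := abs_le.mp (hnorm' i)
      constructor <;> nlinarith [this.1, this.2]
    have hBadGbound : mynoise D BadG ≤ ENNReal.ofReal ε := by
      have hC3a : ∀ i : Fin m, mynoise D {g | (D:ℝ)/16 ≤ ip g ((S i).1.2)}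
          ≤ ENNReal.ofReal (Real.exp (-(D:ℝ)/2048)) :=
        fun i => C3 D hD0 _ (hsc i).1 (hsc i).2
      have hC3b : ∀ i : Fin m, mynoise D {g | (D:ℝ)/16 ≤ ip g (-((S i).1.2))}
          ≤ ENNReal.ofReal (Real.exp (-(D:ℝ)/2048)) :=
        fun i => C3 D hD0 _ (by rw [sqnorm_neg]; exact (hsc i).1)
          (by rw [sqnorm_neg]; exact (hsc i).2)
      set c := ENNReal.ofReal (Real.exp (-(D:ℝ)/2048)) with hc
      have hU : ∀ (V : Fin m → Set (Fin D → ℝ)), (∀ i, mynoise D (V i) ≤ c) →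
          mynoise D (⋃ i, V i) ≤ (m:ℝ≥0∞) * c := by
        intro V hV
        refine le_trans (measure_iUnion_le _) ?_
        calc ∑' i : Fin m, mynoise D (V i) ≤ ∑' _i : Fin m, c := ENNReal.tsum_le_tsum hV
          _ = (m:ℝ≥0∞) * c := by
            rw [tsum_fintype, Finset.sum_const, Finset.card_univ, Fintype.card_fin, nsmul_eq_mul]
      have hcle : c ≤ ENNReal.ofReal (ε/(6*m)) := ENNReal.ofReal_le_ofReal hexpε
      have hmc : (m:ℝ≥0∞) * c ≤ ENNReal.ofReal ((m:ℝ)*(ε/(6*m))) := by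
        rw [ENNReal.ofReal_mul (by positivity), ENNReal.ofReal_natCast]
        exact mul_le_mul_right hcle _
      calc mynoise D BadG
          ≤ ((mynoise D {g | (D:ℝ) + (D:ℝ)/16 ≤ sqnorm g}
              + mynoise D {g | sqnorm g ≤ (D:ℝ) - (D:ℝ)/16})
              + mynoise D (⋃ i, {g | (D:ℝ)/16 ≤ ip g ((S i).1.2)}))
              + mynoise D (⋃ i, {g | (D:ℝ)/16 ≤ ip g (-((S i).1.2))}) := by
            refine le_trans (measure_union_le _ _) ?_
            refine add_le_add (le_trans (measure_union_le _ _) ?_) le_rfl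
            exact add_le_add (measure_union_le _ _) le_rfl
        _ ≤ ((c + c) + (m:ℝ≥0∞)*c) + (m:ℝ≥0∞)*c :=
            add_le_add (add_le_add (add_le_add (C1 D) (C2 D)) (hU _ hC3a)) (hU _ hC3b)
        _ ≤ ((ENNReal.ofReal (ε/(6*m)) + ENNReal.ofReal (ε/(6*m)))
              + ENNReal.ofReal ((m:ℝ)*(ε/(6*m)))) + ENNReal.ofReal ((m:ℝ)*(ε/(6*m))) :=
            add_le_add (add_le_add (add_le_add hcle hcle) hmc) hmc
        _ = ENNReal.ofReal ((ε/(6*m) + ε/(6*m) + (m:ℝ)*(ε/(6*m))) + (m:ℝ)*(ε/(6*m))) := by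
            rw [← ENNReal.ofReal_add (by positivity) (by positivity),
              ← ENNReal.ofReal_add (by positivity) (by positivity),
              ← ENNReal.ofReal_add (by positivity) (by positivity)]
        _ ≤ ENNReal.ofReal ε := by
            apply ENNReal.ofReal_le_ofReal
            have hme : (m:ℝ)*(ε/(6*m)) = ε/6 := by field_simp
            have h6 : ε/(6*m) ≤ ε/6 := by
              apply div_le_div_of_nonneg_left hε.le (by norm_num)
              nlinarith
            rw [hme]
            linarith
    have hmarg : ∀ (y : ℝ) (v : Fin D → ℝ), ((y = 1 ∧ v = u) ∨ (y = -1 ∧ v = -u)) →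
        (∃ i₀, (S i₀).2 = y) →
        (fun g : Fin D → ℝ => ((v, g), y)) ⁻¹' {z : Ex D | z.2 * alg D m S z.1 < 1} ⊆ BadG := by
      rintro y v hyv ⟨i₀, hi₀⟩ g hg
      by_contra hgB
      rw [Set.mem_preimage, Set.mem_setOf_eq] at hg
      simp only [hBadG, Set.mem_union, Set.mem_iUnion, Set.mem_setOf_eq, not_or,
        not_exists] at hgB
      obtain ⟨⟨⟨hg1, hg2⟩, hg3⟩, hg4⟩ := hgB
      have hgnorm : |sqnorm g - (D:ℝ)| ≤ (D:ℝ)/16 := by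
        have ha := not_le.mp hg1
        have hb := not_le.mp hg2
        exact abs_le.mpr ⟨by linarith, by linarith⟩
      have hip' : ∀ i, |ip g ((S i).1.2)| ≤ (D:ℝ)/16 := by
        intro i
        have ha := not_le.mp (hg3 i)
        have hb := not_le.mp (hg4 i)
        rw [ip_neg] at hb
        exact abs_le.mpr ⟨by linarith, by linarith⟩
      exact absurd (margin D m hm u hu4 S hTmem hnorm' y v hyv i₀ hi₀ g hgnorm hip' hDm hD0.le)
        (not_le.mpr hg)
    have htest : testLoss D u γ (alg D m S) ≤ ε := by
      refine le_trans (testLoss_le D m u γ hγle1 S) ?_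
      have hq : Measurable fun z : Ex D => z.2 * alg D m S z.1 :=
        measurable_snd.mul ((measurable_alg D m S).comp measurable_fst)
      have hBadm : MeasurableSet {z : Ex D | z.2 * alg D m S z.1 < 1} :=
        measurableSet_lt hq measurable_const
      have hμ : μD D u {z : Ex D | z.2 * alg D m S z.1 < 1} ≤ ENNReal.ofReal ε := by
        rw [μD_apply D u hBadm]
        have hp1 : mynoise D ((fun g : Fin D → ℝ => ((u, g), (1:ℝ)))
            ⁻¹' {z : Ex D | z.2 * alg D m S z.1 < 1}) ≤ ENNReal.ofReal ε :=
          le_trans (measure_mono (hmarg 1 u (Or.inl ⟨rfl, rfl⟩) hEx1)) hBadGbound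
        have hp2 : mynoise D ((fun g : Fin D → ℝ => ((-u, g), (-1:ℝ)))
            ⁻¹' {z : Ex D | z.2 * alg D m S z.1 < 1}) ≤ ENNReal.ofReal ε :=
          le_trans (measure_mono (hmarg (-1) (-u) (Or.inr ⟨rfl, rfl⟩) hExm1)) hBadGbound
        calc 1/2 * mynoise D ((fun g : Fin D → ℝ => ((u, g), (1:ℝ)))
              ⁻¹' {z : Ex D | z.2 * alg D m S z.1 < 1})
            + 1/2 * mynoise D ((fun g : Fin D → ℝ => ((-u, g), (-1:ℝ)))
              ⁻¹' {z : Ex D | z.2 * alg D m S z.1 < 1})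
            ≤ 1/2 * ENNReal.ofReal ε + 1/2 * ENNReal.ofReal ε :=
              add_le_add (mul_le_mul_right hp1 _) (mul_le_mul_right hp2 _)
          _ = ENNReal.ofReal ε := by
              rw [one_div, ← add_mul, ENNReal.inv_two_add_inv_two, one_mul]
      exact ENNReal.toReal_le_of_le_ofReal hε.le hμ
    have hemp := empLoss_nonneg D m γ (alg D m S) S
    show testLoss D u γ (alg D m S) - empLoss D m γ (alg D m S) S ≤ ε
    linarith
  have hmem : ε ∈ {ε' : ℝ | 0 ≤ ε' ∧ ENNReal.ofReal (1-δ) ≤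
      μS D m u {S | testLoss D u γ (alg D m S) - empLoss D m γ (alg D m S) S ≤ ε'}} :=
    ⟨hε.le, le_trans hG (measure_mono hsub)⟩
  exact csInf_le ⟨0, fun x hx => hx.1⟩ hmem

end ExpExample
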